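/- Suppose (Ā, B̄) is controllable, i.e., [B̄, ĀB̄, …, Ā^{n−1}B̄] has full row rank n. Then the perturbed pair (Ā + B̄K_SS, B̄(I_p + K_SI)) is controllable if and only if v B̄ K_SI ≠ −v B̄ for every left eigenvector v ∈ ℂ^{1×n} of Ā + B̄ K_SS. -/

import Mathlib

open Matrix

/-- Controllability matrix `[B, AB, …, A^(n-1)B]` of the pair `(A, B)`. -/
noncomputable def ctrbM {n p : ℕ} (A : Matrix (Fin n) (Fin n) ℝ) (B : Matrix (Fin n) (Fin p) ℝ) :
    Matrix (Fin n) (Fin n × Fin p) ℝ :=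
  Matrix.of fun i jk => ((A ^ (jk.1 : ℕ) * B : Matrix (Fin n) (Fin p) ℝ) i jk.2)

section Helpers

variable {n q : ℕ}

/-- vecMul distributes over a finite sum of matrices. -/
lemma vecMul_finsetSum {K : Type*} [Field K] {m : Type*} [Fintype m] {ι : Type*}
    (s : Finset ι) (M : ι → Matrix (Fin n) m K) (v : Fin n → K) :
    v ᵥ* (∑ i ∈ s, M i) = ∑ i ∈ s, v ᵥ* (M i) := by
  classical
  induction s using Finset.induction_on with
  | empty => simp [Matrix.vecMul_zero]
  | insert _ _ h ih => simp [Finset.sum_insert h, Matrix.vecMul_add, ih]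

lemma vecMul_smulMatrix {K : Type*} [Field K] {m : Type*} [Fintype m]
    (c : K) (M : Matrix (Fin n) m K) (v : Fin n → K) :
    v ᵥ* (c • M) = c • (v ᵥ* M) := by
  ext j
  simp [Matrix.vecMul, dotProduct, Finset.smul_sum, mul_left_comm, Finset.mul_sum]

/-- Full row rank iff trivial left kernel. -/
lemma rank_eq_card_iff_vecMul {K : Type*} [Field K] {m : Type*} [Fintype m]
    (M : Matrix (Fin n) m K) :
    M.rank = n ↔ ∀ v : Fin n → K, v ᵥ* M = 0 → v = 0 := by
  classical
  rw [← Matrix.rank_transpose]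
  have hco : ∀ v : Fin n → K, Mᵀ.mulVecLin v = v ᵥ* M := fun v => Matrix.mulVec_transpose M v
  have hrn := LinearMap.finrank_range_add_finrank_ker (Mᵀ.mulVecLin)
  have hdom : Module.finrank K (Fin n → K) = n := by simp
  rw [hdom] at hrn
  unfold Matrix.rank
  constructor
  · intro hr v hv
    have hker : LinearMap.ker Mᵀ.mulVecLin = ⊥ := by
      have h0 : Module.finrank K (LinearMap.ker Mᵀ.mulVecLin) = 0 := by omega
      exact Submodule.finrank_eq_zero.mp h0
    have : Mᵀ.mulVecLin v = 0 := by rw [hco]; exact hv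
    exact (LinearMap.ker_eq_bot'.mp hker) v this
  · intro h
    have hker : LinearMap.ker Mᵀ.mulVecLin = ⊥ := by
      rw [LinearMap.ker_eq_bot']
      intro v hv
      exact h v (by rw [← hco]; exact hv)
    have : Module.finrank K (LinearMap.ker Mᵀ.mulVecLin) = 0 := by
      rw [hker]; simp
    omega

/-- Real-kernel triviality iff complex-kernel triviality. -/
lemma kernel_real_iff_complex {m : Type*} [Fintype m] (M : Matrix (Fin n) m ℝ) :
    (∀ v : Fin n → ℝ, v ᵥ* M = 0 → v = 0) ↔
      (∀ v : Fin n → ℂ, v ᵥ* (M.map (algebraMap ℝ ℂ)) = 0 → v = 0) := by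
  constructor
  · intro h v hv
    have hre : (fun i => (v i).re) ᵥ* M = 0 := by
      funext j
      have hj := congrFun hv j
      have := congrArg Complex.re hj
      simpa [Matrix.vecMul, dotProduct, Complex.mul_re, Complex.re_sum] using this
    have him : (fun i => (v i).im) ᵥ* M = 0 := by
      funext j
      have hj := congrFun hv j
      have := congrArg Complex.im hj
      simpa [Matrix.vecMul, dotProduct, Complex.mul_im, Complex.im_sum] using this
    have h1 := h _ hre
    have h2 := h _ him
    funext i
    have e1 := congrFun h1 i
    have e2 := congrFun h2 i
    simp only [Pi.zero_apply] at e1 e2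
    exact Complex.ext e1 e2
  · intro h v hv
    have : (fun i => ((v i : ℂ))) ᵥ* (M.map (algebraMap ℝ ℂ)) = 0 := by
      funext j
      have hj := congrFun hv j
      simp only [Matrix.vecMul, dotProduct, Matrix.map_apply, Pi.zero_apply] at hj ⊢
      have : ((∑ i, v i * M i j : ℝ) : ℂ) = 0 := by exact_mod_cast congrArg (fun x : ℝ => (x : ℂ)) hj
      push_cast at this
      simpa [Algebra.algebraMap_eq_smul_one] using this
    have h0 := h _ this
    funext i
    have := congrFun h0 i
    simpa using this

/-- Cayley–Hamilton consequence: `A^n` is a combination of lower powers. -/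
lemma pow_dim_eq_sum (hn : 0 < n) (Ac : Matrix (Fin n) (Fin n) ℂ) :
    ∃ c : Fin n → ℂ, Ac ^ n = ∑ i : Fin n, c i • Ac ^ (i : ℕ) := by
  classical
  set p := Ac.charpoly with hp
  set q : Polynomial ℂ := Polynomial.X ^ n - p with hq
  have hdq : q.natDegree < n := by
    by_cases hq0 : q = 0
    · simpa [hq0] using hn
    · rw [Polynomial.natDegree_lt_iff_degree_lt hq0]
      have : (Polynomial.X ^ n - p).degree < (Polynomial.X ^ n : Polynomial ℂ).degree := by
        apply Polynomial.degree_sub_lt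
        · rw [Polynomial.degree_X_pow, Matrix.charpoly_degree_eq_dim]
          simp
        · exact pow_ne_zero _ Polynomial.X_ne_zero
        · simp [hp, Polynomial.Monic.leadingCoeff (Ac.charpoly_monic)]
      rw [Polynomial.degree_X_pow] at this
      exact this
  refine ⟨fun i => q.coeff (i : ℕ), ?_⟩
  have h1 : Polynomial.aeval Ac q = Ac ^ n := by
    rw [hq, map_sub, Matrix.aeval_self_charpoly, sub_zero, Polynomial.aeval_X_pow]
  have h2 : Polynomial.aeval Ac q = ∑ i ∈ Finset.range n, q.coeff i • Ac ^ i :=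
    Polynomial.aeval_eq_sum_range' hdq Ac
  rw [← h1, h2, Finset.sum_range fun i => q.coeff i • Ac ^ i]

/-- If some nonzero `v` annihilates the whole controllability family, there is a left
eigenvector annihilating `B`. -/
lemma exists_left_eigvec (Ac : Matrix (Fin n) (Fin n) ℂ) (Bc : Matrix (Fin n) (Fin q) ℂ)
    (v : Fin n → ℂ) (hv : v ≠ 0) (h : ∀ k : Fin n, v ᵥ* (Ac ^ (k : ℕ) * Bc) = 0) :
    ∃ (w : Fin n → ℂ) (μ : ℂ), w ≠ 0 ∧ w ᵥ* Ac = μ • w ∧ w ᵥ* Bc = 0 := by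
  classical
  have hn : 0 < n := Nat.pos_of_ne_zero fun h0 => hv (funext fun i => absurd i.2 (by omega))
  set W : Submodule ℂ (Fin n → ℂ) :=
    ⨅ k : Fin n, LinearMap.ker (Ac ^ (k : ℕ) * Bc).vecMulLinear with hWdef
  have hmem : ∀ x : Fin n → ℂ, x ∈ W ↔ ∀ k : Fin n, x ᵥ* (Ac ^ (k : ℕ) * Bc) = 0 := by
    intro x
    simp [hWdef, Submodule.mem_iInf, LinearMap.mem_ker]
  have hvW : v ∈ W := (hmem v).mpr h
  obtain ⟨c, hc⟩ := pow_dim_eq_sum hn Ac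
  have hWinv : ∀ x ∈ W, Ac.vecMulLinear x ∈ W := by
    intro x hx
    rw [hmem] at hx ⊢
    intro k
    have key : ∀ m : ℕ, m < n → x ᵥ* (Ac ^ m * Bc) = 0 := fun m hm => hx ⟨m, hm⟩
    simp only [Matrix.vecMulLinear_apply, Matrix.vecMul_vecMul]
    have hA : Ac * (Ac ^ (k : ℕ) * Bc) = Ac ^ ((k : ℕ) + 1) * Bc := by
      rw [← Matrix.mul_assoc, ← pow_succ']
    rw [hA]
    rcases lt_or_eq_of_le (Nat.succ_le_of_lt k.isLt) with hlt | heq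
    · exact key _ hlt
    · have heq' : (k : ℕ) + 1 = n := by omega
      rw [heq', hc, Matrix.sum_mul]
      have : x ᵥ* (∑ i : Fin n, (c i • Ac ^ (i : ℕ)) * Bc) =
          ∑ i : Fin n, x ᵥ* ((c i • Ac ^ (i : ℕ)) * Bc) :=
        vecMul_finsetSum _ _ _
      rw [this]
      apply Finset.sum_eq_zero
      intro i _
      rw [Matrix.smul_mul, vecMul_smulMatrix, key _ i.isLt, smul_zero]
  have : Nontrivial W := by
    exact nontrivial_of_ne ⟨v, hvW⟩ 0 fun hcon => hv (congrArg Subtype.val hcon)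
  obtain ⟨μ, hμ⟩ := Module.End.exists_eigenvalue (Ac.vecMulLinear.restrict hWinv)
  obtain ⟨w, hw⟩ := hμ.exists_hasEigenvector
  have hw0 : (w : Fin n → ℂ) ≠ 0 := fun hcon => hw.right (Subtype.ext hcon)
  have hweq : Ac.vecMulLinear (w : Fin n → ℂ) = μ • (w : Fin n → ℂ) := by
    have := Module.End.mem_eigenspace_iff.mp hw.left
    exact congrArg Subtype.val this
  refine ⟨(w : Fin n → ℂ), μ, hw0, ?_, ?_⟩
  · simpa using hweq
  · have := (hmem _).mp w.2 ⟨0, hn⟩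
    simpa using this

end Helpers

theorem stmt10 {n p : ℕ}
    (A : Matrix (Fin n) (Fin n) ℝ) (B : Matrix (Fin n) (Fin p) ℝ)
    (KSS : Matrix (Fin p) (Fin n) ℝ) (KSI : Matrix (Fin p) (Fin p) ℝ)
    (hctrb : (ctrbM A B).rank = n) :
    (ctrbM (A + B * KSS) (B * (1 + KSI))).rank = n ↔
      ∀ (v : Fin n → ℂ) (μ : ℂ), v ≠ 0 →
        Matrix.vecMul v ((A + B * KSS).map (algebraMap ℝ ℂ)) = μ • v →
        Matrix.vecMul v ((B * KSI).map (algebraMap ℝ ℂ)) ≠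
          -(Matrix.vecMul v (B.map (algebraMap ℝ ℂ))) := by
  classical
  set Ar := A + B * KSS with hAr
  set Br := B * (1 + KSI) with hBr
  set Ac := Ar.map (algebraMap ℝ ℂ) with hAc
  set Bc := Br.map (algebraMap ℝ ℂ) with hBc
  have hmappow : ∀ k : ℕ, (Ar ^ k).map (algebraMap ℝ ℂ) = Ac ^ k := by
    intro k
    induction k with
    | zero => funext i j; simp [Matrix.map_apply, Matrix.one_apply, apply_ite]
    | succ k ih => rw [pow_succ, Matrix.map_mul, ih, pow_succ]
  have hmapmul : ∀ k : ℕ, (Ar ^ k * Br).map (algebraMap ℝ ℂ) = Ac ^ k * Bc := by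
    intro k; rw [Matrix.map_mul, hmappow]
  have hCeq : ∀ (v : Fin n → ℂ) (kj : Fin n × Fin p),
      (v ᵥ* ((ctrbM Ar Br).map (algebraMap ℝ ℂ))) kj = (v ᵥ* (Ac ^ (kj.1 : ℕ) * Bc)) kj.2 := by
    intro v kj
    rw [← hmapmul]
    simp [Matrix.vecMul, dotProduct, ctrbM, Matrix.map_apply]
  have hker : ∀ v : Fin n → ℂ,
      v ᵥ* ((ctrbM Ar Br).map (algebraMap ℝ ℂ)) = 0 ↔
        ∀ k : Fin n, v ᵥ* (Ac ^ (k : ℕ) * Bc) = 0 := by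
    intro v
    constructor
    · intro h0 k
      funext j
      have := congrFun h0 (k, j)
      rw [hCeq v (k, j)] at this
      simpa using this
    · intro h0
      funext kj
      rw [hCeq v kj, h0 kj.1]
      simp
  have hBsum : Bc = B.map (algebraMap ℝ ℂ) + (B * KSI).map (algebraMap ℝ ℂ) := by
    have hBr' : Br = B + B * KSI := by rw [hBr, Matrix.mul_add, Matrix.mul_one]
    rw [hBc, hBr']
    funext i j
    simp [Matrix.map_apply, Matrix.add_apply, map_add]
  have hBsplit : ∀ v : Fin n → ℂ,
      v ᵥ* Bc = v ᵥ* (B.map (algebraMap ℝ ℂ)) + v ᵥ* ((B * KSI).map (algebraMap ℝ ℂ)) := by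
    intro v; rw [hBsum, Matrix.vecMul_add]
  rw [rank_eq_card_iff_vecMul, kernel_real_iff_complex]
  constructor
  · intro hfull v μ hv heig hcontra
    apply hv
    have hvB : v ᵥ* Bc = 0 := by rw [hBsplit v, hcontra]; simp
    have hpow : ∀ k : ℕ, v ᵥ* Ac ^ k = (μ ^ k) • v := by
      intro k
      induction k with
      | zero => simp
      | succ k ih =>
        rw [pow_succ, ← Matrix.vecMul_vecMul, ih, Matrix.smul_vecMul, heig, smul_smul,
          ← pow_succ]
    apply hfull
    rw [hker v]
    intro k
    rw [← Matrix.vecMul_vecMul, hpow, Matrix.smul_vecMul, hvB, smul_zero]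
  · intro hR v hv0
    by_contra hvne
    obtain ⟨w, μ, hw0, hweig, hwB⟩ := exists_left_eigvec Ac Bc v hvne ((hker v).mp hv0)
    apply hR w μ hw0 hweig
    have := hBsplit w
    rw [hwB] at this
    exact eq_neg_of_add_eq_zero_right (by linear_combination -this)
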